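/- Let X be a chain (X_0,...,X_ζ) in ℝ^d with exchangeable increments, ζ ∈ ℕ, and let η ∈ ℝ^d \ {0}. Define Z_i = ⟨X_i, η⟩, let τ be the last index at which Z attains its minimum, and define the post-minimum chain →X_i = X_{τ+i} − X_τ (for i ≤ ζ−τ) and reversed pre-minimum chain ←X_i = X_{τ−i} − X_τ (for i ≤ τ). Define A⁺_i = #{j ≤ i : Z_j > 0}, A⁻_i = #{j ≤ i : Z_j ≤ 0}, with right inverses α±, and the rearranged chains X↑_i = Σ_{j ≤ α⁺_i} 1{Z_j>0} (X_j − X_{j−1}) for i ≤ A⁺_ζ and X↓_i = Σ_{j ≤ α⁻_i} 1{Z_j≤0} (X_j − X_{j−1}) for i ≤ A⁻_ζ (both equal to a cemetery state † beyond their lifetimes). Then the pair (X↓, X↑) has the same law as (−←X, →X). -/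

import Mathlib

open MeasureTheory Matrix
open scoped Classical

noncomputable section

/-- The coproduct measurable space on `Option α` (the cemetery state `†` is `none`). -/
instance optionMeasurableSpace {α : Type*} [m : MeasurableSpace α] :
    MeasurableSpace (Option α) := m.map some

variable {d : ℕ}

/-- The projected chain `Z_i = ⟨x_i, η⟩`. -/
def projZ (η : Fin d → ℝ) (x : ℕ → Fin d → ℝ) (i : ℕ) : ℝ := x i ⬝ᵥ η

/-- The last index `τ` in `{0, …, ζ}` at which `Z` attains its minimum. -/
def lastArgmin (η : Fin d → ℝ) (ζ : ℕ) (x : ℕ → Fin d → ℝ) : ℕ :=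
  sSup {i | i ≤ ζ ∧ ∀ j ≤ ζ, projZ η x i ≤ projZ η x j}

/-- The post-minimum chain `→X_i = X_{τ+i} - X_τ` for `i ≤ ζ - τ`, cemetery afterwards. -/
def postChain (η : Fin d → ℝ) (ζ : ℕ) (x : ℕ → Fin d → ℝ) (i : ℕ) : Option (Fin d → ℝ) :=
  if i ≤ ζ - lastArgmin η ζ x then
    some (x (lastArgmin η ζ x + i) - x (lastArgmin η ζ x))
  else none

/-- The reversed pre-minimum chain `←X_i = X_{τ-i} - X_τ` for `i ≤ τ`, cemetery afterwards. -/
def preChain (η : Fin d → ℝ) (ζ : ℕ) (x : ℕ → Fin d → ℝ) (i : ℕ) : Option (Fin d → ℝ) :=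
  if i ≤ lastArgmin η ζ x then
    some (x (lastArgmin η ζ x - i) - x (lastArgmin η ζ x))
  else none

/-- `A⁺_i = #{j ∈ {1,…,i} : Z_j > 0}`. -/
def Apl (η : Fin d → ℝ) (x : ℕ → Fin d → ℝ) (i : ℕ) : ℕ :=
  ((Finset.Icc 1 i).filter fun j => 0 < projZ η x j).card

/-- `A⁻_i = #{j ∈ {1,…,i} : Z_j ≤ 0}`. -/
def Ami (η : Fin d → ℝ) (x : ℕ → Fin d → ℝ) (i : ℕ) : ℕ :=
  ((Finset.Icc 1 i).filter fun j => projZ η x j ≤ 0).card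

/-- Right inverse `α⁺_i = inf{j : A⁺_j = i}`. -/
def alphaPl (η : Fin d → ℝ) (x : ℕ → Fin d → ℝ) (i : ℕ) : ℕ := sInf {j | Apl η x j = i}

/-- Right inverse `α⁻_i = inf{j : A⁻_j = i}`. -/
def alphaMi (η : Fin d → ℝ) (x : ℕ → Fin d → ℝ) (i : ℕ) : ℕ := sInf {j | Ami η x j = i}

/-- The rearranged chain `X↑_i = Σ_{j ≤ α⁺_i} 1{Z_j > 0}(X_j - X_{j-1})` for `i ≤ A⁺_ζ`. -/
def upChain (η : Fin d → ℝ) (ζ : ℕ) (x : ℕ → Fin d → ℝ) (i : ℕ) : Option (Fin d → ℝ) :=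
  if i ≤ Apl η x ζ then
    some (∑ j ∈ Finset.Icc 1 (alphaPl η x i),
      if 0 < projZ η x j then x j - x (j - 1) else 0)
  else none

/-- The rearranged chain `X↓_i = Σ_{j ≤ α⁻_i} 1{Z_j ≤ 0}(X_j - X_{j-1})` for `i ≤ A⁻_ζ`. -/
def downChain (η : Fin d → ℝ) (ζ : ℕ) (x : ℕ → Fin d → ℝ) (i : ℕ) : Option (Fin d → ℝ) :=
  if i ≤ Ami η x ζ then
    some (∑ j ∈ Finset.Icc 1 (alphaMi η x i),
      if projZ η x j ≤ 0 then x j - x (j - 1) else 0)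
  else none


section Counting

variable (P : ℕ → Prop)

def cnt (n : ℕ) : ℕ := ((Finset.Icc 1 n).filter P).card

def cinv (i : ℕ) : ℕ := sInf {j | cnt P j = i}

variable {P}

lemma cnt_zero : cnt P 0 = 0 := by simp [cnt]

lemma cnt_succ (n : ℕ) : cnt P (n + 1) = cnt P n + if P (n + 1) then 1 else 0 := by
  unfold cnt
  rw [← Finset.insert_Icc_right_eq_Icc_add_one (by omega : 1 ≤ n + 1), Finset.filter_insert]
  split_ifs with h
  · rw [Finset.card_insert_of_notMem (by simp)]
  · simp

lemma cnt_mono : Monotone (cnt P) := by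
  intro a b hab
  exact Finset.card_le_card (Finset.filter_subset_filter _
    (Finset.Icc_subset_Icc le_rfl hab))

lemma cnt_le (n : ℕ) : cnt P n ≤ n := by
  calc cnt P n ≤ (Finset.Icc 1 n).card := Finset.card_filter_le _ _
  _ = n := by rw [Nat.card_Icc]; omega

lemma cnt_succ_le (n : ℕ) : cnt P (n + 1) ≤ cnt P n + 1 := by
  rw [cnt_succ]; split_ifs <;> omega

lemma cnt_add_cnt_not (n : ℕ) : cnt P n + cnt (fun j => ¬ P j) n = n := by
  unfold cnt
  rw [Finset.card_filter_add_card_filter_not, Nat.card_Icc]; omega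

lemma cnt_congr (h : ∀ j, P j ↔ Q j) : ∀ n, cnt P n = cnt Q n := by
  intro n
  unfold cnt
  congr 1
  exact Finset.filter_congr (fun j _ => by simp [h j])

lemma exists_cnt_eq {i n : ℕ} (h : i ≤ cnt P n) : ∃ j, j ≤ n ∧ cnt P j = i := by
  induction n with
  | zero => exact ⟨0, le_rfl, by rw [cnt_zero] at h ⊢; omega⟩
  | succ n ih =>
    by_cases hi : i ≤ cnt P n
    · obtain ⟨j, hj1, hj2⟩ := ih hi
      exact ⟨j, by omega, hj2⟩
    · have := cnt_succ_le (P := P) n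
      exact ⟨n + 1, le_rfl, by omega⟩

lemma cnt_cinv {i n : ℕ} (h : i ≤ cnt P n) : cnt P (cinv P i) = i := by
  obtain ⟨j, _, hj⟩ := exists_cnt_eq h
  exact Nat.sInf_mem (⟨j, hj⟩ : {j | cnt P j = i}.Nonempty)

lemma cinv_le {i n : ℕ} (h : i ≤ cnt P n) : cinv P i ≤ n := by
  obtain ⟨j, hj1, hj2⟩ := exists_cnt_eq h
  exact le_trans (Nat.sInf_le hj2) hj1

lemma cinv_zero : cinv P 0 = 0 :=
  Nat.sInf_eq_zero.2 (Or.inl cnt_zero)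

lemma cinv_eq {i m : ℕ} (hm : cnt P m = i) (hmin : ∀ j < m, cnt P j ≠ i) :
    cinv P i = m := by
  have h1 : cinv P i ≤ m := Nat.sInf_le hm
  have h2 : cnt P (cinv P i) = i := Nat.sInf_mem (⟨m, hm⟩ : {j | cnt P j = i}.Nonempty)
  rcases lt_or_eq_of_le h1 with h | h
  · exact absurd h2 (hmin _ h)
  · exact h

lemma cinv_spec {i n : ℕ} (h1 : 1 ≤ i) (h : i ≤ cnt P n) :
    P (cinv P i) ∧ cnt P (cinv P i - 1) + 1 = i ∧ 1 ≤ cinv P i := by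
  set m := cinv P i with hm
  have hcm : cnt P m = i := cnt_cinv h
  have hm1 : 1 ≤ m := by
    rcases Nat.eq_zero_or_pos m with h0 | h0
    · rw [h0, cnt_zero] at hcm; omega
    · exact h0
  have hprev : cnt P (m - 1) ≠ i := by
    intro hc
    have : cinv P i ≤ m - 1 := Nat.sInf_le hc
    omega
  have hstep : cnt P m = cnt P (m - 1) + if P m then 1 else 0 := by
    have : m = (m - 1) + 1 := by omega
    rw [this, cnt_succ, ← this]
  have hmono := cnt_mono (P := P) (Nat.sub_le m 1)
  by_cases hP : P m
  · rw [if_pos hP] at hstep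
    exact ⟨hP, by omega, hm1⟩
  · rw [if_neg hP] at hstep; omega

lemma cinv_lt_cinv {i j n : ℕ} (hij : i < j) (hj : j ≤ cnt P n) : cinv P i < cinv P j := by
  have hi : cnt P (cinv P i) = i := cnt_cinv (le_trans (le_of_lt hij) hj)
  have hjj : cnt P (cinv P j) = j := cnt_cinv hj
  by_contra hc
  push_neg at hc
  have := cnt_mono (P := P) hc
  omega

lemma sum_ite_eq_sum_cinv {M : Type*} [AddCommGroup M] (f : ℕ → M) (m : ℕ) :
    ∑ j ∈ Finset.Icc 1 m, (if P j then f j else 0)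
      = ∑ l ∈ Finset.Icc 1 (cnt P m), f (cinv P l) := by
  induction m with
  | zero => simp [cnt_zero]
  | succ m ih =>
    rw [Finset.sum_Icc_succ_top (by omega)]
    by_cases hP : P (m + 1)
    · have hcnt : cnt P (m + 1) = cnt P m + 1 := by rw [cnt_succ, if_pos hP]
      have hcinv : cinv P (cnt P m + 1) = m + 1 := by
        apply cinv_eq (by omega)
        intro j hj hc
        have := cnt_mono (P := P) (by omega : j ≤ m)
        omega
      rw [hcnt, Finset.sum_Icc_succ_top (by omega), ← ih, if_pos hP, hcinv]
    · have hcnt : cnt P (m + 1) = cnt P m := by rw [cnt_succ, if_neg hP]; omega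
      rw [hcnt, ← ih, if_neg hP, add_zero]

lemma cinv_congr_of_agree {Q : ℕ → Prop} {n i : ℕ}
    (hag : ∀ j ≤ n, cnt P j = cnt Q j) (h : i ≤ cnt P n) : cinv P i = cinv Q i := by
  have hQ : i ≤ cnt Q n := by rw [← hag n le_rfl]; exact h
  apply le_antisymm
  · have h1 : cnt Q (cinv Q i) = i := cnt_cinv hQ
    have h2 : cinv Q i ≤ n := cinv_le hQ
    exact Nat.sInf_le (by rw [Set.mem_setOf_eq, hag _ h2]; exact h1)
  · have h1 : cnt P (cinv P i) = i := cnt_cinv h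
    have h2 : cinv P i ≤ n := cinv_le h
    exact Nat.sInf_le (by rw [Set.mem_setOf_eq, ← hag _ h2]; exact h1)

lemma mem_iff_cnt_succ {j : ℕ} (hj : 1 ≤ j) : P j ↔ cnt P j = cnt P (j - 1) + 1 := by
  have : j = (j - 1) + 1 := by omega
  rw [this, cnt_succ, ← this]
  split_ifs with h
  · simp [h]
  · exact iff_of_false h (by omega)

end Counting

section PathOf

variable {d : ℕ}

def pathOf {ζ : ℕ} (δ : Fin ζ → Fin d → ℝ) (n : ℕ) : Fin d → ℝ :=
  ∑ j ∈ Finset.univ.filter (fun j : Fin ζ => (j : ℕ) < n), δ j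

lemma pathOf_zero {ζ : ℕ} (δ : Fin ζ → Fin d → ℝ) : pathOf δ 0 = 0 := by
  simp [pathOf]

lemma pathOf_succ {ζ : ℕ} (δ : Fin ζ → Fin d → ℝ) {n : ℕ} (h : n < ζ) :
    pathOf δ (n + 1) = pathOf δ n + δ ⟨n, h⟩ := by
  unfold pathOf
  rw [show (Finset.univ.filter fun j : Fin ζ => (j : ℕ) < n + 1)
      = insert (⟨n, h⟩ : Fin ζ) (Finset.univ.filter fun j : Fin ζ => (j : ℕ) < n) from by
    ext j
    simp only [Finset.mem_filter, Finset.mem_insert, Finset.mem_univ, true_and, Fin.ext_iff]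
    omega]
  rw [Finset.sum_insert (by simp)]
  exact add_comm _ _

lemma pathOf_stable {ζ : ℕ} (δ : Fin ζ → Fin d → ℝ) {n : ℕ} (h : ζ ≤ n) :
    pathOf δ n = pathOf δ ζ := by
  unfold pathOf
  congr 1
  ext j
  simp only [Finset.mem_filter, Finset.mem_univ, true_and]
  have := j.isLt
  omega

lemma sum_increments (x : ℕ → Fin d → ℝ) (hx0 : x 0 = 0) (n : ℕ) :
    x n = ∑ m ∈ Finset.Icc 1 n, (x m - x (m - 1)) := by
  induction n with
  | zero => simp [hx0]
  | succ n ih =>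
    rw [Finset.sum_Icc_succ_top (by omega)]
    simp only [Nat.add_sub_cancel]
    rw [← ih]
    abel

lemma projZ_pathOf_zero {ζ : ℕ} (η : Fin d → ℝ) (δ : Fin ζ → Fin d → ℝ) :
    projZ η (pathOf δ) 0 = 0 := by
  rw [projZ, pathOf_zero]
  exact zero_dotProduct η

/-- bridges between the statement's `Apl`/`Ami`/`alphaPl`/`alphaMi` and `cnt`/`cinv` -/
lemma Apl_eq_cnt (η : Fin d → ℝ) (x : ℕ → Fin d → ℝ) (n : ℕ) :
    Apl η x n = cnt (fun j => 0 < projZ η x j) n := by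
  unfold Apl cnt
  congr 1

lemma Ami_eq_cnt (η : Fin d → ℝ) (x : ℕ → Fin d → ℝ) (n : ℕ) :
    Ami η x n = cnt (fun j => projZ η x j ≤ 0) n := by
  unfold Ami cnt
  congr 1

lemma alphaPl_eq_cinv (η : Fin d → ℝ) (x : ℕ → Fin d → ℝ) (i : ℕ) :
    alphaPl η x i = cinv (fun j => 0 < projZ η x j) i := by
  unfold alphaPl cinv
  congr 1

lemma alphaMi_eq_cinv (η : Fin d → ℝ) (x : ℕ → Fin d → ℝ) (i : ℕ) :
    alphaMi η x i = cinv (fun j => projZ η x j ≤ 0) i := by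
  unfold alphaMi cinv
  congr 1

end PathOf

section Pathwise

variable {d : ℕ} (η : Fin d → ℝ) {ζ : ℕ} (δ : Fin ζ → Fin d → ℝ)

/-- predicate: step `j` (1-based) ends weakly negative -/
def Pneg : ℕ → Prop := fun j => projZ η (pathOf δ) j ≤ 0

/-- predicate: step `j` (1-based) ends positive -/
def Ppos : ℕ → Prop := fun j => 0 < projZ η (pathOf δ) j

/-- number of weakly negative steps -/
def kneg : ℕ := cnt (Pneg η δ) ζ

/-- increment of the path at position `m` (1-based) -/
def incr (m : ℕ) : Fin d → ℝ := pathOf δ m - pathOf δ (m - 1)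

/-- partial sums of the negative increments, in order -/
def Dm (r : ℕ) : Fin d → ℝ := ∑ l ∈ Finset.Icc 1 r, incr δ (cinv (Pneg η δ) l)

/-- partial sums of the positive increments, in order -/
def Dp (r : ℕ) : Fin d → ℝ := ∑ l ∈ Finset.Icc 1 r, incr δ (cinv (Ppos η δ) l)

/-- the rearranging map on 1-based positions -/
def sfun (m : ℕ) : ℕ :=
  if m ≤ kneg η δ then cinv (Pneg η δ) (kneg η δ + 1 - m)
  else cinv (Ppos η δ) (m - kneg η δ)

lemma kneg_le : kneg η δ ≤ ζ := cnt_le ζ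

lemma cnt_Ppos_eq : cnt (Ppos η δ) ζ = ζ - kneg η δ := by
  have h1 : cnt (Pneg η δ) ζ + cnt (fun j => ¬ Pneg η δ j) ζ = ζ := cnt_add_cnt_not ζ
  have h2 : cnt (fun j => ¬ Pneg η δ j) ζ = cnt (Ppos η δ) ζ :=
    cnt_congr (fun j => by rw [Pneg, Ppos, not_le]) ζ
  rw [← h2]
  unfold kneg
  omega

lemma sfun_mem {m : ℕ} (hm : 1 ≤ m) (hm2 : m ≤ ζ) :
    1 ≤ sfun η δ m ∧ sfun η δ m ≤ ζ := by
  unfold sfun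
  split_ifs with h
  · have hi1 : 1 ≤ kneg η δ + 1 - m := by omega
    have hi2 : kneg η δ + 1 - m ≤ cnt (Pneg η δ) ζ := by unfold kneg; omega
    exact ⟨(cinv_spec hi1 hi2).2.2, cinv_le hi2⟩
  · have hi1 : 1 ≤ m - kneg η δ := by omega
    have hi2 : m - kneg η δ ≤ cnt (Ppos η δ) ζ := by rw [cnt_Ppos_eq]; omega
    exact ⟨(cinv_spec hi1 hi2).2.2, cinv_le hi2⟩

lemma sfun_inj {m m' : ℕ} (hm : 1 ≤ m) (hm2 : m ≤ ζ) (hm' : 1 ≤ m') (hm2' : m' ≤ ζ)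
    (heq : sfun η δ m = sfun η δ m') : m = m' := by
  unfold sfun at heq
  split_ifs at heq with h h' h'
  · -- both negative
    by_contra hne
    rcases Nat.lt_or_ge m m' with hlt | hge
    · have := cinv_lt_cinv (P := Pneg η δ) (by omega : kneg η δ + 1 - m' < kneg η δ + 1 - m)
        (by unfold kneg; omega : kneg η δ + 1 - m ≤ cnt (Pneg η δ) ζ)
      omega
    · have := cinv_lt_cinv (P := Pneg η δ) (by omega : kneg η δ + 1 - m < kneg η δ + 1 - m')
        (by unfold kneg; omega : kneg η δ + 1 - m' ≤ cnt (Pneg η δ) ζ)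
      omega
  · -- m negative, m' positive : contradiction
    exfalso
    have h1 : Pneg η δ (cinv (Pneg η δ) (kneg η δ + 1 - m)) :=
      (cinv_spec (by omega) (by unfold kneg; omega : kneg η δ + 1 - m ≤ cnt (Pneg η δ) ζ)).1
    have h2 : Ppos η δ (cinv (Ppos η δ) (m' - kneg η δ)) :=
      (cinv_spec (by omega) (by rw [cnt_Ppos_eq]; omega : m' - kneg η δ ≤ cnt (Ppos η δ) ζ)).1
    rw [heq] at h1
    rw [Pneg] at h1; rw [Ppos] at h2
    linarith
  · exfalso
    have h1 : Pneg η δ (cinv (Pneg η δ) (kneg η δ + 1 - m')) :=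
      (cinv_spec (by omega) (by unfold kneg; omega : kneg η δ + 1 - m' ≤ cnt (Pneg η δ) ζ)).1
    have h2 : Ppos η δ (cinv (Ppos η δ) (m - kneg η δ)) :=
      (cinv_spec (by omega) (by rw [cnt_Ppos_eq]; omega : m - kneg η δ ≤ cnt (Ppos η δ) ζ)).1
    rw [← heq] at h1
    rw [Pneg] at h1; rw [Ppos] at h2
    linarith
  · -- both positive
    by_contra hne
    rcases Nat.lt_or_ge m m' with hlt | hge
    · have := cinv_lt_cinv (P := Ppos η δ) (by omega : m - kneg η δ < m' - kneg η δ)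
        (by rw [cnt_Ppos_eq]; omega : m' - kneg η δ ≤ cnt (Ppos η δ) ζ)
      omega
    · have := cinv_lt_cinv (P := Ppos η δ) (by omega : m' - kneg η δ < m - kneg η δ)
        (by rw [cnt_Ppos_eq]; omega : m - kneg η δ ≤ cnt (Ppos η δ) ζ)
      omega

/-- The Bertoin rearrangement permutation. -/
def bperm : Equiv.Perm (Fin ζ) :=
  Equiv.ofBijective
    (fun i => ⟨sfun η δ ((i : ℕ) + 1) - 1, by
      have h := sfun_mem η δ (by omega : 1 ≤ (i : ℕ) + 1) (by omega : (i : ℕ) + 1 ≤ ζ)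
      omega⟩)
    ((Finite.injective_iff_bijective).1 (by
      intro i i' hii
      have h := sfun_mem η δ (by omega : 1 ≤ (i : ℕ) + 1) (by omega : (i : ℕ) + 1 ≤ ζ)
      have h' := sfun_mem η δ (by omega : 1 ≤ (i' : ℕ) + 1) (by omega : (i' : ℕ) + 1 ≤ ζ)
      have : sfun η δ ((i : ℕ) + 1) - 1 = sfun η δ ((i' : ℕ) + 1) - 1 := congrArg Fin.val hii
      have := sfun_inj η δ (by omega : 1 ≤ (i : ℕ) + 1) (by omega) (by omega : 1 ≤ (i' : ℕ) + 1)
        (by omega) (by omega)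
      exact Fin.ext (by omega)))

lemma bperm_apply (i : Fin ζ) : ((bperm η δ i : Fin ζ) : ℕ) = sfun η δ ((i : ℕ) + 1) - 1 := rfl

/-- the rearranged increment tuple -/
def permTup : Fin ζ → Fin d → ℝ := fun j => δ (bperm η δ j)

lemma incr_eq_tup {ζ' : ℕ} (δ' : Fin ζ' → Fin d → ℝ) {m : ℕ} (h1 : 1 ≤ m) (h2 : m ≤ ζ') :
    incr δ' m = δ' ⟨m - 1, by omega⟩ := by
  rcases m with _ | m'
  · omega
  · unfold incr
    rw [pathOf_succ δ' (by omega : m' < ζ')]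
    simp

lemma incr_permTup {m : ℕ} (hm : 1 ≤ m) (hm2 : m ≤ ζ) :
    incr (permTup η δ) m = incr δ (sfun η δ m) := by
  have hs := sfun_mem η δ hm hm2
  rw [incr_eq_tup (permTup η δ) hm hm2, incr_eq_tup δ hs.1 hs.2]
  unfold permTup
  have hb : ((bperm η δ) ⟨m - 1, by omega⟩ : Fin ζ) = ⟨sfun η δ m - 1, by omega⟩ := by
    apply Fin.ext
    rw [bperm_apply]
    simp only [Fin.val_mk]
    rw [show m - 1 + 1 = m from by omega]
  rw [hb]

lemma Dm_succ (r : ℕ) : Dm η δ (r + 1) = Dm η δ r + incr δ (cinv (Pneg η δ) (r + 1)) := by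
  unfold Dm
  rw [Finset.sum_Icc_succ_top (by omega)]

lemma Dp_succ (r : ℕ) : Dp η δ (r + 1) = Dp η δ r + incr δ (cinv (Ppos η δ) (r + 1)) := by
  unfold Dp
  rw [Finset.sum_Icc_succ_top (by omega)]

lemma Dm_zero : Dm η δ 0 = 0 := by simp [Dm]

lemma Dp_zero : Dp η δ 0 = 0 := by simp [Dp]

lemma pathOf_permTup_le {n : ℕ} (hn : n ≤ kneg η δ) :
    pathOf (permTup η δ) n = Dm η δ (kneg η δ) - Dm η δ (kneg η δ - n) := by
  induction n with
  | zero => rw [pathOf_zero]; simp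
  | succ n ih =>
    have hk := kneg_le η δ
    have hn' : n ≤ kneg η δ := by omega
    rw [pathOf_succ (permTup η δ) (by omega : n < ζ), ih hn']
    have e : permTup η δ ⟨n, by omega⟩ = incr δ (sfun η δ (n + 1)) := by
      rw [← incr_permTup η δ (by omega : 1 ≤ n + 1) (by omega : n + 1 ≤ ζ)]
      unfold incr
      rw [pathOf_succ (permTup η δ) (by omega : n < ζ)]
      simp
    rw [e]
    have hsf : sfun η δ (n + 1) = cinv (Pneg η δ) (kneg η δ - n) := by
      unfold sfun
      rw [if_pos (by omega : n + 1 ≤ kneg η δ)]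
      congr 1
      omega
    rw [hsf]
    have : Dm η δ (kneg η δ - n) = Dm η δ (kneg η δ - (n + 1)) +
        incr δ (cinv (Pneg η δ) (kneg η δ - n)) := by
      rw [show kneg η δ - n = (kneg η δ - (n + 1)) + 1 by omega, Dm_succ]
    rw [this]
    abel

lemma pathOf_permTup_ge {n : ℕ} (hn : kneg η δ ≤ n) (hn2 : n ≤ ζ) :
    pathOf (permTup η δ) n = Dm η δ (kneg η δ) + Dp η δ (n - kneg η δ) := by
  induction n, hn using Nat.le_induction with
  | base =>
    rw [pathOf_permTup_le η δ le_rfl]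
    simp [Dm_zero, Dp_zero]
  | succ n hn ih =>
    rw [pathOf_succ (permTup η δ) (by omega : n < ζ), ih (by omega)]
    have e : permTup η δ ⟨n, by omega⟩ = incr δ (sfun η δ (n + 1)) := by
      rw [← incr_permTup η δ (by omega : 1 ≤ n + 1) (by omega : n + 1 ≤ ζ)]
      unfold incr
      rw [pathOf_succ (permTup η δ) (by omega : n < ζ)]
      simp
    rw [e]
    have hsf : sfun η δ (n + 1) = cinv (Ppos η δ) (n + 1 - kneg η δ) := by
      unfold sfun
      rw [if_neg (by omega)]
    rw [hsf]
    rw [show n + 1 - kneg η δ = (n - kneg η δ) + 1 by omega, Dp_succ]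
    abel

lemma Dm_dot_succ (r : ℕ) :
    Dm η δ (r + 1) ⬝ᵥ η = Dm η δ r ⬝ᵥ η +
      (projZ η (pathOf δ) (cinv (Pneg η δ) (r + 1))
        - projZ η (pathOf δ) (cinv (Pneg η δ) (r + 1) - 1)) := by
  rw [Dm_succ, add_dotProduct]
  congr 1
  unfold incr
  rw [sub_dotProduct]
  rfl

lemma Dp_dot_succ (r : ℕ) :
    Dp η δ (r + 1) ⬝ᵥ η = Dp η δ r ⬝ᵥ η +
      (projZ η (pathOf δ) (cinv (Ppos η δ) (r + 1))
        - projZ η (pathOf δ) (cinv (Ppos η δ) (r + 1) - 1)) := by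
  rw [Dp_succ, add_dotProduct]
  congr 1
  unfold incr
  rw [sub_dotProduct]
  rfl

lemma lemN : ∀ r, r ≤ kneg η δ →
    Dm η δ r ⬝ᵥ η ≤ 0 ∧ Dm η δ r ⬝ᵥ η ≤ projZ η (pathOf δ) (cinv (Pneg η δ) r) := by
  intro r
  induction r with
  | zero =>
    intro _
    rw [Dm_zero, zero_dotProduct, cinv_zero, projZ_pathOf_zero]
    exact ⟨le_rfl, le_rfl⟩
  | succ r ih =>
    intro h
    obtain ⟨ih1, ih2⟩ := ih (by omega)
    have hcnt : r + 1 ≤ cnt (Pneg η δ) ζ := h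
    have hsp := cinv_spec (P := Pneg η δ) (by omega) hcnt
    set n := cinv (Pneg η δ) (r + 1) with hn
    have hZn : projZ η (pathOf δ) n ≤ 0 := hsp.1
    have hcntn : cnt (Pneg η δ) (n - 1) + 1 = r + 1 := hsp.2.1
    have hn1 : 1 ≤ n := hsp.2.2
    rw [Dm_dot_succ, ← hn]
    by_cases hc : 1 ≤ n - 1 ∧ projZ η (pathOf δ) (n - 1) ≤ 0
    · have hPm : Pneg η δ (n - 1) := hc.2
      have hcnt2 : cnt (Pneg η δ) (n - 1) = cnt (Pneg η δ) (n - 1 - 1) + 1 :=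
        (mem_iff_cnt_succ hc.1).1 hPm
      have hr1 : cinv (Pneg η δ) r = n - 1 := by
        apply cinv_eq (by omega)
        intro j hj hcj
        have := cnt_mono (P := Pneg η δ) (by omega : j ≤ n - 1 - 1)
        omega
      rw [hr1] at ih2
      constructor <;> linarith
    · have hz : 0 ≤ projZ η (pathOf δ) (n - 1) := by
        rcases Nat.eq_zero_or_pos (n - 1) with h0 | h0
        · rw [h0, projZ_pathOf_zero]
        · push_neg at hc
          exact le_of_lt (lt_of_not_ge (fun hle => absurd (hc h0) (not_lt.2 hle)))
      constructor <;> linarith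

lemma lemP : ∀ r, r ≤ cnt (Ppos η δ) ζ →
    0 ≤ Dp η δ r ⬝ᵥ η ∧ projZ η (pathOf δ) (cinv (Ppos η δ) r) ≤ Dp η δ r ⬝ᵥ η ∧
      (1 ≤ r → 0 < Dp η δ r ⬝ᵥ η) := by
  intro r
  induction r with
  | zero =>
    intro _
    rw [Dp_zero, zero_dotProduct, cinv_zero, projZ_pathOf_zero]
    exact ⟨le_rfl, le_rfl, by omega⟩
  | succ r ih =>
    intro h
    obtain ⟨ih1, ih2, _⟩ := ih (by omega)
    have hsp := cinv_spec (P := Ppos η δ) (by omega) h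
    set p := cinv (Ppos η δ) (r + 1) with hp
    have hZp : 0 < projZ η (pathOf δ) p := hsp.1
    have hcntp : cnt (Ppos η δ) (p - 1) + 1 = r + 1 := hsp.2.1
    have hp1 : 1 ≤ p := hsp.2.2
    rw [Dp_dot_succ, ← hp]
    by_cases hc : 1 ≤ p - 1 ∧ 0 < projZ η (pathOf δ) (p - 1)
    · have hPm : Ppos η δ (p - 1) := hc.2
      have hcnt2 : cnt (Ppos η δ) (p - 1) = cnt (Ppos η δ) (p - 1 - 1) + 1 :=
        (mem_iff_cnt_succ hc.1).1 hPm
      have hr1 : cinv (Ppos η δ) r = p - 1 := by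
        apply cinv_eq (by omega)
        intro j hj hcj
        have := cnt_mono (P := Ppos η δ) (by omega : j ≤ p - 1 - 1)
        omega
      rw [hr1] at ih2
      refine ⟨by linarith, by linarith, fun _ => by linarith⟩
    · have hz : projZ η (pathOf δ) (p - 1) ≤ 0 := by
        rcases Nat.eq_zero_or_pos (p - 1) with h0 | h0
        · rw [h0, projZ_pathOf_zero]
        · push_neg at hc
          exact hc h0
      refine ⟨by linarith, by linarith, fun _ => by linarith⟩

lemma projZ_permTup_le {j : ℕ} (hj : j ≤ kneg η δ) :
    projZ η (pathOf (permTup η δ)) j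
      = Dm η δ (kneg η δ) ⬝ᵥ η - Dm η δ (kneg η δ - j) ⬝ᵥ η := by
  show pathOf (permTup η δ) j ⬝ᵥ η = _
  rw [pathOf_permTup_le η δ hj, sub_dotProduct]

lemma projZ_permTup_ge {j : ℕ} (hj : kneg η δ ≤ j) (hj2 : j ≤ ζ) :
    projZ η (pathOf (permTup η δ)) j
      = Dm η δ (kneg η δ) ⬝ᵥ η + Dp η δ (j - kneg η δ) ⬝ᵥ η := by
  show pathOf (permTup η δ) j ⬝ᵥ η = _
  rw [pathOf_permTup_ge η δ hj hj2, add_dotProduct]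

lemma projZ_permTup_k :
    projZ η (pathOf (permTup η δ)) (kneg η δ) = Dm η δ (kneg η δ) ⬝ᵥ η := by
  rw [projZ_permTup_le η δ le_rfl, Nat.sub_self, Dm_zero, zero_dotProduct, sub_zero]

lemma permTup_min : ∀ j ≤ ζ,
    projZ η (pathOf (permTup η δ)) (kneg η δ) ≤ projZ η (pathOf (permTup η δ)) j := by
  intro j hj
  rcases le_or_gt j (kneg η δ) with hle | hgt
  · rw [projZ_permTup_k, projZ_permTup_le η δ hle]
    have := (lemN η δ (kneg η δ - j) (by omega)).1
    linarith
  · rw [projZ_permTup_k, projZ_permTup_ge η δ (le_of_lt hgt) hj]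
    have := ((lemP η δ (j - kneg η δ) (by rw [cnt_Ppos_eq]; omega)).2.2 (by omega))
    linarith

lemma permTup_strict : ∀ j, kneg η δ < j → j ≤ ζ →
    projZ η (pathOf (permTup η δ)) (kneg η δ) < projZ η (pathOf (permTup η δ)) j := by
  intro j hgt hj
  rw [projZ_permTup_k, projZ_permTup_ge η δ (le_of_lt hgt) hj]
  have := ((lemP η δ (j - kneg η δ) (by rw [cnt_Ppos_eq]; omega)).2.2 (by omega))
  linarith

lemma lastArgmin_permTup : lastArgmin η ζ (pathOf (permTup η δ)) = kneg η δ := by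
  unfold lastArgmin
  have hmem : kneg η δ ∈ {i | i ≤ ζ ∧ ∀ j ≤ ζ, projZ η (pathOf (permTup η δ)) i
      ≤ projZ η (pathOf (permTup η δ)) j} := ⟨kneg_le η δ, permTup_min η δ⟩
  apply le_antisymm
  · apply csSup_le ⟨kneg η δ, hmem⟩
    intro i hi
    by_contra hc
    push_neg at hc
    have h1 := permTup_strict η δ i hc hi.1
    have h2 := hi.2 (kneg η δ) (kneg_le η δ)
    linarith
  · exact le_csSup ⟨ζ, fun i hi => hi.1⟩ hmem

lemma Ami_pathOf_eq (n : ℕ) : Ami η (pathOf δ) n = cnt (Pneg η δ) n := Ami_eq_cnt η _ n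

lemma Apl_pathOf_eq (n : ℕ) : Apl η (pathOf δ) n = cnt (Ppos η δ) n := Apl_eq_cnt η _ n

lemma downSum_eq_Dm {i : ℕ} (hi : i ≤ kneg η δ) :
    (∑ j ∈ Finset.Icc 1 (alphaMi η (pathOf δ) i),
      if projZ η (pathOf δ) j ≤ 0 then pathOf δ j - pathOf δ (j - 1) else 0) = Dm η δ i := by
  rw [alphaMi_eq_cinv]
  have h1 : (∑ j ∈ Finset.Icc 1 (cinv (fun j => projZ η (pathOf δ) j ≤ 0) i),
      if projZ η (pathOf δ) j ≤ 0 then pathOf δ j - pathOf δ (j - 1) else 0)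
      = ∑ l ∈ Finset.Icc 1 (cnt (Pneg η δ) (cinv (Pneg η δ) i)), incr δ (cinv (Pneg η δ) l) :=
    sum_ite_eq_sum_cinv (P := Pneg η δ) (fun m => incr δ m) _
  rw [h1, cnt_cinv (show i ≤ cnt (Pneg η δ) ζ from hi)]
  rfl

lemma upSum_eq_Dp {i : ℕ} (hi : i ≤ cnt (Ppos η δ) ζ) :
    (∑ j ∈ Finset.Icc 1 (alphaPl η (pathOf δ) i),
      if 0 < projZ η (pathOf δ) j then pathOf δ j - pathOf δ (j - 1) else 0) = Dp η δ i := by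
  rw [alphaPl_eq_cinv]
  have h1 : (∑ j ∈ Finset.Icc 1 (cinv (fun j => 0 < projZ η (pathOf δ) j) i),
      if 0 < projZ η (pathOf δ) j then pathOf δ j - pathOf δ (j - 1) else 0)
      = ∑ l ∈ Finset.Icc 1 (cnt (Ppos η δ) (cinv (Ppos η δ) i)), incr δ (cinv (Ppos η δ) l) :=
    sum_ite_eq_sum_cinv (P := Ppos η δ) (fun m => incr δ m) _
  rw [h1, cnt_cinv hi]
  rfl

lemma down_eq : downChain η ζ (pathOf δ)
    = fun i => Option.map (fun v => -v) (preChain η ζ (pathOf (permTup η δ)) i) := by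
  funext i
  unfold downChain preChain
  rw [lastArgmin_permTup, Ami_pathOf_eq,
    show cnt (Pneg η δ) ζ = kneg η δ from rfl]
  have hk := kneg_le η δ
  by_cases hi : i ≤ kneg η δ
  · rw [if_pos hi, if_pos hi, Option.map_some]
    congr 1
    rw [downSum_eq_Dm η δ hi, pathOf_permTup_le η δ (by omega : kneg η δ - i ≤ kneg η δ),
      pathOf_permTup_le η δ (le_rfl), Nat.sub_self, Dm_zero,
      show kneg η δ - (kneg η δ - i) = i by omega]
    abel
  · rw [if_neg hi, if_neg hi, Option.map_none]

lemma up_eq : upChain η ζ (pathOf δ) = postChain η ζ (pathOf (permTup η δ)) := by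
  funext i
  unfold upChain postChain
  rw [lastArgmin_permTup, Apl_pathOf_eq]
  have hk := kneg_le η δ
  have hzk : cnt (Ppos η δ) ζ = ζ - kneg η δ := cnt_Ppos_eq η δ
  by_cases hi : i ≤ cnt (Ppos η δ) ζ
  · rw [if_pos hi, if_pos (by omega : i ≤ ζ - kneg η δ)]
    congr 1
    rw [upSum_eq_Dp η δ hi, pathOf_permTup_ge η δ (by omega : kneg η δ ≤ kneg η δ + i)
        (by omega : kneg η δ + i ≤ ζ),
      pathOf_permTup_le η δ (le_rfl), Nat.sub_self, Dm_zero,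
      show kneg η δ + i - kneg η δ = i by omega]
    abel
  · rw [if_neg hi, if_neg (by omega : ¬ i ≤ ζ - kneg η δ)]

lemma cnt_Ppos_eq_sub (j : ℕ) : cnt (Ppos η δ) j = j - cnt (Pneg η δ) j := by
  have h1 : cnt (Pneg η δ) j + cnt (fun m => ¬ Pneg η δ m) j = j := cnt_add_cnt_not j
  have h2 : cnt (fun m => ¬ Pneg η δ m) j = cnt (Ppos η δ) j :=
    cnt_congr (fun m => by rw [Pneg, Ppos, not_le]) j
  omega

lemma projZ_pathOf_decomp {j : ℕ} (hj : j ≤ ζ) :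
    projZ η (pathOf δ) j
      = projZ η (pathOf (permTup η δ)) (kneg η δ + cnt (Ppos η δ) j)
        - projZ η (pathOf (permTup η δ)) (kneg η δ - cnt (Pneg η δ) j) := by
  have hk := kneg_le η δ
  have ha : cnt (Pneg η δ) j ≤ kneg η δ := cnt_mono hj
  have hb : cnt (Ppos η δ) j ≤ cnt (Ppos η δ) ζ := cnt_mono hj
  have hbz : cnt (Ppos η δ) ζ = ζ - kneg η δ := cnt_Ppos_eq η δ
  have hsplit : pathOf δ j = Dm η δ (cnt (Pneg η δ) j) + Dp η δ (cnt (Ppos η δ) j) := by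
    have h0 : pathOf δ j = ∑ m ∈ Finset.Icc 1 j, incr δ m := by
      unfold incr
      exact sum_increments _ (pathOf_zero δ) j
    have h1 : ∀ m ∈ Finset.Icc 1 j, incr δ m
        = (if Pneg η δ m then incr δ m else 0) + (if Ppos η δ m then incr δ m else 0) := by
      intro m _
      by_cases hP : Pneg η δ m
      · rw [if_pos hP, if_neg (by rw [Ppos, not_lt]; exact hP), add_zero]
      · rw [if_neg hP, if_pos (by rw [Ppos]; exact not_le.mp hP), zero_add]
    rw [h0, Finset.sum_congr rfl h1, Finset.sum_add_distrib,
      sum_ite_eq_sum_cinv (P := Pneg η δ) (fun m => incr δ m) j,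
      sum_ite_eq_sum_cinv (P := Ppos η δ) (fun m => incr δ m) j]
    rfl
  have hDm : Dm η δ (cnt (Pneg η δ) j)
      = pathOf (permTup η δ) (kneg η δ) - pathOf (permTup η δ) (kneg η δ - cnt (Pneg η δ) j) := by
    rw [pathOf_permTup_le η δ (by omega : kneg η δ - cnt (Pneg η δ) j ≤ kneg η δ),
      pathOf_permTup_le η δ le_rfl, Nat.sub_self, Dm_zero,
      show kneg η δ - (kneg η δ - cnt (Pneg η δ) j) = cnt (Pneg η δ) j by omega]
    abel
  have hDp : Dp η δ (cnt (Ppos η δ) j)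
      = pathOf (permTup η δ) (kneg η δ + cnt (Ppos η δ) j) - pathOf (permTup η δ) (kneg η δ) := by
    rw [pathOf_permTup_ge η δ (by omega) (by omega : kneg η δ + cnt (Ppos η δ) j ≤ ζ),
      pathOf_permTup_le η δ le_rfl, Nat.sub_self, Dm_zero,
      show kneg η δ + cnt (Ppos η δ) j - kneg η δ = cnt (Ppos η δ) j by omega]
    abel
  have hvec : pathOf δ j
      = pathOf (permTup η δ) (kneg η δ + cnt (Ppos η δ) j)
        - pathOf (permTup η δ) (kneg η δ - cnt (Pneg η δ) j) := by
    rw [hsplit, hDm, hDp]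
    abel
  show pathOf δ j ⬝ᵥ η = _
  rw [hvec, sub_dotProduct]
  rfl

end Pathwise

section Uniqueness

variable {d : ℕ} (η : Fin d → ℝ) {ζ : ℕ}

lemma kneg_eq_of_permTup {δ₁ δ₂ : Fin ζ → Fin d → ℝ}
    (hperm : permTup η δ₁ = permTup η δ₂) : kneg η δ₁ = kneg η δ₂ := by
  rw [← lastArgmin_permTup η δ₁, ← lastArgmin_permTup η δ₂, hperm]

lemma no_cross {δ₁ δ₂ : Fin ζ → Fin d → ℝ}
    (hperm : permTup η δ₁ = permTup η δ₂) :
    ¬ ∃ j, j ≤ ζ ∧ cnt (Pneg η δ₂) j < cnt (Pneg η δ₁) j := by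
  rintro ⟨j0, hj0, hlt⟩
  have hk : kneg η δ₂ = kneg η δ₁ := (kneg_eq_of_permTup η hperm).symm
  have hkz : kneg η δ₁ ≤ ζ := kneg_le η δ₁
  have hAz : cnt (Pneg η δ₁) ζ = cnt (Pneg η δ₂) ζ := by
    show kneg η δ₁ = kneg η δ₂; omega
  have hj0ζ : j0 < ζ := by
    rcases Nat.lt_or_ge j0 ζ with h | h
    · exact h
    · exfalso
      have hEq : j0 = ζ := by omega
      rw [hEq] at hlt
      omega
  have hR : ∃ j, j0 < j ∧ cnt (Pneg η δ₁) j ≤ cnt (Pneg η δ₂) j :=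
    ⟨ζ, hj0ζ, by omega⟩
  have hspec := Nat.find_spec hR
  have hj₂ζ : Nat.find hR ≤ ζ := Nat.find_le ⟨hj0ζ, by omega⟩
  have hj₂0 : j0 < Nat.find hR := hspec.1
  have hprev : cnt (Pneg η δ₂) (Nat.find hR - 1) < cnt (Pneg η δ₁) (Nat.find hR - 1) := by
    rcases Nat.lt_or_ge j0 (Nat.find hR - 1) with h | h
    · have hmin := Nat.find_min hR (m := Nat.find hR - 1) (by omega)
      push_neg at hmin
      exact hmin h
    · have hEq : Nat.find hR - 1 = j0 := by omega
      rw [hEq]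
      exact hlt
  have hstep1 : cnt (Pneg η δ₁) (Nat.find hR)
      = cnt (Pneg η δ₁) (Nat.find hR - 1) + if Pneg η δ₁ (Nat.find hR) then 1 else 0 := by
    have h := cnt_succ (P := Pneg η δ₁) (Nat.find hR - 1)
    rwa [show Nat.find hR - 1 + 1 = Nat.find hR by omega] at h
  have hstep2 : cnt (Pneg η δ₂) (Nat.find hR)
      = cnt (Pneg η δ₂) (Nat.find hR - 1) + if Pneg η δ₂ (Nat.find hR) then 1 else 0 := by
    have h := cnt_succ (P := Pneg η δ₂) (Nat.find hR - 1)
    rwa [show Nat.find hR - 1 + 1 = Nat.find hR by omega] at h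
  have hP1 : ¬ Pneg η δ₁ (Nat.find hR) := by
    intro hP
    rw [if_pos hP] at hstep1
    by_cases hQ : Pneg η δ₂ (Nat.find hR)
    · rw [if_pos hQ] at hstep2; omega
    · rw [if_neg hQ] at hstep2; omega
  have hP2 : Pneg η δ₂ (Nat.find hR) := by
    by_contra hP
    rw [if_neg hP] at hstep2
    rw [if_neg hP1] at hstep1
    omega
  have hac : cnt (Pneg η δ₁) (Nat.find hR) = cnt (Pneg η δ₂) (Nat.find hR) := by
    rw [if_neg hP1] at hstep1
    rw [if_pos hP2] at hstep2
    omega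
  have hd1 := projZ_pathOf_decomp η δ₁ hj₂ζ
  have hd2 := projZ_pathOf_decomp η δ₂ hj₂ζ
  have hb1 : cnt (Ppos η δ₁) (Nat.find hR) = Nat.find hR - cnt (Pneg η δ₁) (Nat.find hR) :=
    cnt_Ppos_eq_sub η δ₁ _
  have hb2 : cnt (Ppos η δ₂) (Nat.find hR) = Nat.find hR - cnt (Pneg η δ₂) (Nat.find hR) :=
    cnt_Ppos_eq_sub η δ₂ _
  have hZ1 : 0 < projZ η (pathOf δ₁) (Nat.find hR) := by
    rw [Pneg, not_le] at hP1
    exact hP1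
  have hZ2 : projZ η (pathOf δ₂) (Nat.find hR) ≤ 0 := hP2
  rw [hd1] at hZ1
  rw [hd2, ← hperm, hk, hb2, ← hac, ← hb1] at hZ2
  linarith

lemma cnt_eq_of_permTup {δ₁ δ₂ : Fin ζ → Fin d → ℝ}
    (hperm : permTup η δ₁ = permTup η δ₂) :
    ∀ j ≤ ζ, cnt (Pneg η δ₁) j = cnt (Pneg η δ₂) j := by
  intro j hj
  by_contra hne
  rcases Nat.lt_or_ge (cnt (Pneg η δ₂) j) (cnt (Pneg η δ₁) j) with h | h
  · exact no_cross η hperm ⟨j, hj, h⟩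
  · exact no_cross η hperm.symm ⟨j, hj, by omega⟩

lemma bperm_unique {δ₁ δ₂ : Fin ζ → Fin d → ℝ}
    (hperm : permTup η δ₁ = permTup η δ₂) : bperm η δ₁ = bperm η δ₂ := by
  have hk : kneg η δ₁ = kneg η δ₂ := kneg_eq_of_permTup η hperm
  have hag : ∀ j ≤ ζ, cnt (Pneg η δ₁) j = cnt (Pneg η δ₂) j := cnt_eq_of_permTup η hperm
  have hagp : ∀ j ≤ ζ, cnt (Ppos η δ₁) j = cnt (Ppos η δ₂) j := by
    intro j hj
    rw [cnt_Ppos_eq_sub, cnt_Ppos_eq_sub, hag j hj]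
  have hsfun : ∀ m, 1 ≤ m → m ≤ ζ → sfun η δ₁ m = sfun η δ₂ m := by
    intro m hm1 hm2
    unfold sfun
    rw [← hk]
    split_ifs with h
    · exact cinv_congr_of_agree hag (show kneg η δ₁ + 1 - m ≤ cnt (Pneg η δ₁) ζ by
        unfold kneg; omega)
    · apply cinv_congr_of_agree hagp
      rw [cnt_Ppos_eq η δ₁]
      have := kneg_le η δ₁
      omega
  apply Equiv.ext
  intro i
  apply Fin.ext
  rw [bperm_apply, bperm_apply, hsfun ((i : ℕ) + 1) (by omega) (by omega : (i : ℕ) + 1 ≤ ζ)]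

/-- recover the permutation from the rearranged tuple -/
def psi (δ' : Fin ζ → Fin d → ℝ) : Equiv.Perm (Fin ζ) :=
  if h : ∃ δ, permTup η δ = δ' then bperm η h.choose else 1

lemma psi_spec (δ : Fin ζ → Fin d → ℝ) : psi η (permTup η δ) = bperm η δ := by
  have h : ∃ δ₀, permTup η δ₀ = permTup η δ := ⟨δ, rfl⟩
  rw [psi, dif_pos h]
  exact bperm_unique η h.choose_spec

/-- the bijection on permutations underlying the exchangeability argument -/
def phi (δ : Fin ζ → Fin d → ℝ) : Equiv.Perm (Fin ζ) → Equiv.Perm (Fin ζ) :=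
  fun π => π * bperm η (fun j => δ (π j))

lemma permTup_phi (δ : Fin ζ → Fin d → ℝ) (π : Equiv.Perm (Fin ζ)) :
    permTup η (fun j => δ (π j)) = fun j => δ (phi η δ π j) := rfl

lemma phi_inj (δ : Fin ζ → Fin d → ℝ) : Function.Injective (phi η δ) := by
  intro π₁ π₂ h
  have h1 : permTup η (fun j => δ (π₁ j)) = permTup η (fun j => δ (π₂ j)) := by
    rw [permTup_phi, permTup_phi, h]
  have h2 : bperm η (fun j => δ (π₁ j)) = bperm η (fun j => δ (π₂ j)) := bperm_unique η h1
  have h3 : phi η δ π₁ = π₁ * bperm η (fun j => δ (π₂ j)) := by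
    rw [phi, h2]
  rw [h] at h3
  exact mul_right_cancel h3.symm

end Uniqueness

section FG

variable {d : ℕ} (η : Fin d → ℝ) {ζ : ℕ}

/-- the pair `(X↓, X↑)` as a function of the increment tuple -/
def Ffun (η : Fin d → ℝ) (ζ : ℕ) (δ : Fin ζ → Fin d → ℝ) :
    (ℕ → Option (Fin d → ℝ)) × (ℕ → Option (Fin d → ℝ)) :=
  (downChain η ζ (pathOf δ), upChain η ζ (pathOf δ))

/-- the pair `(-←X, →X)` as a function of the increment tuple -/
def Gfun (η : Fin d → ℝ) (ζ : ℕ) (δ : Fin ζ → Fin d → ℝ) :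
    (ℕ → Option (Fin d → ℝ)) × (ℕ → Option (Fin d → ℝ)) :=
  (fun i => Option.map (fun v => -v) (preChain η ζ (pathOf δ) i), postChain η ζ (pathOf δ))

lemma F_eq_G (δ : Fin ζ → Fin d → ℝ) : Ffun η ζ δ = Gfun η ζ (permTup η δ) := by
  unfold Ffun Gfun
  rw [down_eq η δ, up_eq η δ]

lemma sum_FG (δ : Fin ζ → Fin d → ℝ) {M : Type*} [AddCommMonoid M]
    (h : ((ℕ → Option (Fin d → ℝ)) × (ℕ → Option (Fin d → ℝ))) → M) :
    ∑ π : Equiv.Perm (Fin ζ), h (Ffun η ζ (fun j => δ (π j)))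
      = ∑ π : Equiv.Perm (Fin ζ), h (Gfun η ζ (fun j => δ (π j))) := by
  apply Fintype.sum_bijective (phi η δ) ((Finite.injective_iff_bijective).1 (phi_inj η δ))
  intro π
  rw [F_eq_G, permTup_phi]

end FG

section Agree

variable {d : ℕ} (η : Fin d → ℝ) (ζ : ℕ) {x y : ℕ → Fin d → ℝ}

lemma projZ_agree (hxy : ∀ j ≤ ζ, x j = y j) : ∀ j ≤ ζ, projZ η x j = projZ η y j := by
  intro j hj
  rw [projZ, projZ, hxy j hj]

lemma Apl_agree (hxy : ∀ j ≤ ζ, x j = y j) : ∀ n ≤ ζ, Apl η x n = Apl η y n := by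
  intro n hn
  unfold Apl
  congr 1
  apply Finset.filter_congr
  intro j hj
  rw [Finset.mem_Icc] at hj
  rw [projZ_agree η ζ hxy j (by omega)]

lemma Ami_agree (hxy : ∀ j ≤ ζ, x j = y j) : ∀ n ≤ ζ, Ami η x n = Ami η y n := by
  intro n hn
  unfold Ami
  congr 1
  apply Finset.filter_congr
  intro j hj
  rw [Finset.mem_Icc] at hj
  rw [projZ_agree η ζ hxy j (by omega)]

lemma alphaMi_agree (hxy : ∀ j ≤ ζ, x j = y j) {i : ℕ} (hi : i ≤ Ami η x ζ) :
    alphaMi η x i = alphaMi η y i := by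
  rw [alphaMi_eq_cinv, alphaMi_eq_cinv]
  apply cinv_congr_of_agree (n := ζ)
  · intro j hj
    rw [← Ami_eq_cnt, ← Ami_eq_cnt, Ami_agree η ζ hxy j hj]
  · rw [← Ami_eq_cnt]
    exact hi

lemma alphaPl_agree (hxy : ∀ j ≤ ζ, x j = y j) {i : ℕ} (hi : i ≤ Apl η x ζ) :
    alphaPl η x i = alphaPl η y i := by
  rw [alphaPl_eq_cinv, alphaPl_eq_cinv]
  apply cinv_congr_of_agree (n := ζ)
  · intro j hj
    rw [← Apl_eq_cnt, ← Apl_eq_cnt, Apl_agree η ζ hxy j hj]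
  · rw [← Apl_eq_cnt]
    exact hi

lemma alphaMi_le_zeta {i : ℕ} (hi : i ≤ Ami η x ζ) : alphaMi η x i ≤ ζ := by
  rw [alphaMi_eq_cinv]
  apply cinv_le (n := ζ)
  rw [← Ami_eq_cnt]
  exact hi

lemma alphaPl_le_zeta {i : ℕ} (hi : i ≤ Apl η x ζ) : alphaPl η x i ≤ ζ := by
  rw [alphaPl_eq_cinv]
  apply cinv_le (n := ζ)
  rw [← Apl_eq_cnt]
  exact hi

lemma lastArgmin_agree (hxy : ∀ j ≤ ζ, x j = y j) : lastArgmin η ζ x = lastArgmin η ζ y := by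
  unfold lastArgmin
  congr 1
  ext i
  simp only [Set.mem_setOf_eq]
  constructor
  · rintro ⟨h1, h2⟩
    refine ⟨h1, fun j hj => ?_⟩
    rw [← projZ_agree η ζ hxy i h1, ← projZ_agree η ζ hxy j hj]
    exact h2 j hj
  · rintro ⟨h1, h2⟩
    refine ⟨h1, fun j hj => ?_⟩
    rw [projZ_agree η ζ hxy i h1, projZ_agree η ζ hxy j hj]
    exact h2 j hj

lemma lastArgmin_le_zeta : lastArgmin η ζ x ≤ ζ := by
  unfold lastArgmin
  rcases Set.eq_empty_or_nonempty
      {i | i ≤ ζ ∧ ∀ j ≤ ζ, projZ η x i ≤ projZ η x j} with h | h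
  · rw [h, csSup_empty]
    exact Nat.zero_le ζ
  · exact csSup_le h (fun i hi => hi.1)

lemma downChain_agree (hxy : ∀ j ≤ ζ, x j = y j) : downChain η ζ x = downChain η ζ y := by
  funext i
  unfold downChain
  rw [← Ami_agree η ζ hxy ζ le_rfl]
  by_cases hi : i ≤ Ami η x ζ
  · rw [if_pos hi, if_pos hi]
    congr 1
    rw [← alphaMi_agree η ζ hxy hi]
    apply Finset.sum_congr rfl
    intro j hj
    rw [Finset.mem_Icc] at hj
    have hjζ : j ≤ ζ := le_trans hj.2 (alphaMi_le_zeta η ζ hi)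
    rw [projZ_agree η ζ hxy j hjζ, hxy j hjζ, hxy (j - 1) (by omega)]
  · rw [if_neg hi, if_neg hi]

lemma upChain_agree (hxy : ∀ j ≤ ζ, x j = y j) : upChain η ζ x = upChain η ζ y := by
  funext i
  unfold upChain
  rw [← Apl_agree η ζ hxy ζ le_rfl]
  by_cases hi : i ≤ Apl η x ζ
  · rw [if_pos hi, if_pos hi]
    congr 1
    rw [← alphaPl_agree η ζ hxy hi]
    apply Finset.sum_congr rfl
    intro j hj
    rw [Finset.mem_Icc] at hj
    have hjζ : j ≤ ζ := le_trans hj.2 (alphaPl_le_zeta η ζ hi)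
    rw [projZ_agree η ζ hxy j hjζ, hxy j hjζ, hxy (j - 1) (by omega)]
  · rw [if_neg hi, if_neg hi]

lemma preChain_agree (hxy : ∀ j ≤ ζ, x j = y j) : preChain η ζ x = preChain η ζ y := by
  have hτ := lastArgmin_agree η ζ hxy
  have hτζ := lastArgmin_le_zeta η ζ (x := x)
  funext i
  unfold preChain
  rw [← hτ]
  by_cases hi : i ≤ lastArgmin η ζ x
  · rw [if_pos hi, if_pos hi, hxy _ (by omega), hxy _ (by omega)]
  · rw [if_neg hi, if_neg hi]

lemma postChain_agree (hxy : ∀ j ≤ ζ, x j = y j) : postChain η ζ x = postChain η ζ y := by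
  have hτ := lastArgmin_agree η ζ hxy
  have hτζ := lastArgmin_le_zeta η ζ (x := x)
  funext i
  unfold postChain
  rw [← hτ]
  by_cases hi : i ≤ ζ - lastArgmin η ζ x
  · rw [if_pos hi, if_pos hi, hxy _ (by omega), hxy _ (by omega)]
  · rw [if_neg hi, if_neg hi]

lemma pathOf_incr_tuple (x : ℕ → Fin d → ℝ) (hx0 : x 0 = 0) :
    ∀ n ≤ ζ, pathOf (fun j : Fin ζ => x ((j : ℕ) + 1) - x (j : ℕ)) n = x n := by
  intro n
  induction n with
  | zero => intro _; rw [pathOf_zero, hx0]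
  | succ n ih =>
    intro hn
    rw [pathOf_succ _ (by omega : n < ζ), ih (by omega)]
    abel

end Agree

section Meas

lemma measurable_some_opt {α : Type*} [MeasurableSpace α] :
    Measurable (fun a : α => (some a : Option α)) := fun _ hs => hs

lemma measurable_comp_nat {α β : Type*} [MeasurableSpace α] [MeasurableSpace β]
    {H : α → ℕ → β} (hH : ∀ m, Measurable fun a => H a m)
    {u : α → ℕ} (hu : Measurable u) : Measurable fun a => H a (u a) := by
  have h1 : Measurable fun p : α × ℕ => H p.1 p.2 :=
    measurable_from_prod_countable_left fun m => hH m
  exact h1.comp (measurable_id.prodMk hu)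

lemma measurable_nat_sInf {α : Type*} [MeasurableSpace α] {g : α → ℕ → ℕ}
    (hg : ∀ j, Measurable fun a => g a j) (i : ℕ) :
    Measurable fun a => sInf {j | g a j = i} := by
  apply measurable_to_countable'
  intro m
  rcases Nat.eq_zero_or_pos m with rfl | hm
  · have heq : (fun a => sInf {j | g a j = i}) ⁻¹' {0}
        = {a | g a 0 = i} ∪ ⋂ j, {a | ¬ g a j = i} := by
      ext a
      simp only [Set.mem_preimage, Set.mem_singleton_iff, Nat.sInf_eq_zero, Set.mem_union,
        Set.mem_iInter, Set.mem_setOf_eq, Set.eq_empty_iff_forall_notMem]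
    rw [heq]
    exact ((hg 0) (measurableSet_singleton i)).union
      (MeasurableSet.iInter fun j => ((hg j) (measurableSet_singleton i)).compl)
  · have heq : (fun a => sInf {j | g a j = i}) ⁻¹' {m}
        = {a | g a m = i} ∩ ⋂ j, {a | j < m → ¬ g a j = i} := by
      ext a
      simp only [Set.mem_preimage, Set.mem_singleton_iff, Set.mem_inter_iff,
        Set.mem_iInter, Set.mem_setOf_eq]
      constructor
      · intro h
        have hne : {j | g a j = i}.Nonempty := by
          by_contra hemp
          rw [Set.not_nonempty_iff_eq_empty] at hemp
          rw [hemp, Nat.sInf_empty] at h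
          omega
        have h1 := Nat.sInf_mem hne
        rw [h] at h1
        refine ⟨h1, fun j hj => ?_⟩
        have hnm : j ∉ {j' | g a j' = i} :=
          Nat.notMem_of_lt_sInf (s := {j' | g a j' = i}) (by rw [h]; exact hj)
        exact hnm
      · rintro ⟨h1, h2⟩
        apply le_antisymm (Nat.sInf_le (show m ∈ {j | g a j = i} from h1))
        by_contra hlt
        push_neg at hlt
        have hmem := Nat.sInf_mem (⟨m, h1⟩ : {j | g a j = i}.Nonempty)
        exact h2 _ hlt hmem
    rw [heq]
    refine ((hg m) (measurableSet_singleton i)).inter (MeasurableSet.iInter fun j => ?_)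
    by_cases hj : j < m
    · have heq2 : {a | j < m → ¬ g a j = i} = {a | ¬ g a j = i} := by
        ext a; simp [hj]
      rw [heq2]
      exact ((hg j) (measurableSet_singleton i)).compl
    · have heq2 : {a | j < m → ¬ g a j = i} = Set.univ := by
        ext a; simp [hj]
      rw [heq2]
      exact MeasurableSet.univ

variable {d : ℕ} (η : Fin d → ℝ) {ζ : ℕ}

lemma m_pathOf (n : ℕ) : Measurable fun δ : Fin ζ → Fin d → ℝ => pathOf δ n := by
  unfold pathOf
  exact Finset.measurable_sum _ (fun j _ => measurable_pi_apply j)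

lemma m_projZ (n : ℕ) : Measurable fun δ : Fin ζ → Fin d → ℝ => projZ η (pathOf δ) n := by
  have heq : (fun δ : Fin ζ → Fin d → ℝ => projZ η (pathOf δ) n)
      = fun δ => ∑ i : Fin d, pathOf δ n i * η i := rfl
  rw [heq]
  exact Finset.measurable_sum _
    (fun i _ => ((measurable_pi_apply i).comp (m_pathOf n)).mul_const (η i))

lemma m_setZle (n : ℕ) :
    MeasurableSet {δ : Fin ζ → Fin d → ℝ | projZ η (pathOf δ) n ≤ 0} :=
  measurableSet_le (m_projZ η n) measurable_const

lemma m_setZpos (n : ℕ) :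
    MeasurableSet {δ : Fin ζ → Fin d → ℝ | 0 < projZ η (pathOf δ) n} :=
  measurableSet_lt measurable_const (m_projZ η n)

lemma m_Ami (n : ℕ) : Measurable fun δ : Fin ζ → Fin d → ℝ => Ami η (pathOf δ) n := by
  have heq : (fun δ : Fin ζ → Fin d → ℝ => Ami η (pathOf δ) n)
      = fun δ => ∑ j ∈ Finset.Icc 1 n, if projZ η (pathOf δ) j ≤ 0 then 1 else 0 := by
    funext δ
    rw [Ami, Finset.card_filter]
  rw [heq]
  exact Finset.measurable_sum _
    (fun j _ => Measurable.ite (m_setZle η j) measurable_const measurable_const)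

lemma m_Apl (n : ℕ) : Measurable fun δ : Fin ζ → Fin d → ℝ => Apl η (pathOf δ) n := by
  have heq : (fun δ : Fin ζ → Fin d → ℝ => Apl η (pathOf δ) n)
      = fun δ => ∑ j ∈ Finset.Icc 1 n, if 0 < projZ η (pathOf δ) j then 1 else 0 := by
    funext δ
    rw [Apl, Finset.card_filter]
  rw [heq]
  exact Finset.measurable_sum _
    (fun j _ => Measurable.ite (m_setZpos η j) measurable_const measurable_const)

lemma m_alphaMi (i : ℕ) : Measurable fun δ : Fin ζ → Fin d → ℝ => alphaMi η (pathOf δ) i :=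
  measurable_nat_sInf (fun j => m_Ami η j) i

lemma m_alphaPl (i : ℕ) : Measurable fun δ : Fin ζ → Fin d → ℝ => alphaPl η (pathOf δ) i :=
  measurable_nat_sInf (fun j => m_Apl η j) i

lemma m_memArgmin (i : ℕ) : MeasurableSet {δ : Fin ζ → Fin d → ℝ |
    i ≤ ζ ∧ ∀ j ≤ ζ, projZ η (pathOf δ) i ≤ projZ η (pathOf δ) j} := by
  by_cases hi : i ≤ ζ
  · have heq : {δ : Fin ζ → Fin d → ℝ |
        i ≤ ζ ∧ ∀ j ≤ ζ, projZ η (pathOf δ) i ≤ projZ η (pathOf δ) j}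
        = ⋂ j, {δ | j ≤ ζ → projZ η (pathOf δ) i ≤ projZ η (pathOf δ) j} := by
      ext δ
      simp [hi]
    rw [heq]
    refine MeasurableSet.iInter fun j => ?_
    by_cases hj : j ≤ ζ
    · have heq2 : {δ : Fin ζ → Fin d → ℝ |
          j ≤ ζ → projZ η (pathOf δ) i ≤ projZ η (pathOf δ) j}
          = {δ | projZ η (pathOf δ) i ≤ projZ η (pathOf δ) j} := by
        ext δ; simp [hj]
      rw [heq2]
      exact measurableSet_le (m_projZ η i) (m_projZ η j)
    · have heq2 : {δ : Fin ζ → Fin d → ℝ |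
          j ≤ ζ → projZ η (pathOf δ) i ≤ projZ η (pathOf δ) j} = Set.univ := by
        ext δ; simp [hj]
      rw [heq2]
      exact MeasurableSet.univ
  · have heq : {δ : Fin ζ → Fin d → ℝ |
        i ≤ ζ ∧ ∀ j ≤ ζ, projZ η (pathOf δ) i ≤ projZ η (pathOf δ) j} = ∅ := by
      ext δ; simp [hi]
    rw [heq]
    exact MeasurableSet.empty

lemma m_lastArgmin : Measurable fun δ : Fin ζ → Fin d → ℝ => lastArgmin η ζ (pathOf δ) := by
  apply measurable_to_countable'
  intro m
  have hchar : ∀ δ : Fin ζ → Fin d → ℝ, lastArgmin η ζ (pathOf δ) = m ↔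
      ((m ∈ {i | i ≤ ζ ∧ ∀ j ≤ ζ, projZ η (pathOf δ) i ≤ projZ η (pathOf δ) j} ∧
        ∀ i, m < i → i ∉ {i | i ≤ ζ ∧ ∀ j ≤ ζ, projZ η (pathOf δ) i ≤ projZ η (pathOf δ) j}) ∨
       (m = 0 ∧ {i | i ≤ ζ ∧ ∀ j ≤ ζ, projZ η (pathOf δ) i ≤ projZ η (pathOf δ) j} = ∅)) := by
    intro δ
    set S := {i | i ≤ ζ ∧ ∀ j ≤ ζ, projZ η (pathOf δ) i ≤ projZ η (pathOf δ) j} with hS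
    constructor
    · intro h
      rcases Set.eq_empty_or_nonempty S with hemp | hne
      · right
        refine ⟨?_, hemp⟩
        rw [← h]
        unfold lastArgmin
        rw [← hS, hemp, csSup_empty]
        rfl
      · left
        have hbdd : BddAbove S := ⟨ζ, fun i hi => hi.1⟩
        have hmem : sSup S ∈ S := Nat.sSup_mem hne hbdd
        have hsup : lastArgmin η ζ (pathOf δ) = sSup S := rfl
        rw [hsup] at h
        rw [← h]
        refine ⟨hmem, fun i hlt hmem2 => ?_⟩
        exact absurd (le_csSup hbdd hmem2) (by omega)
    · rintro (⟨h1, h2⟩ | ⟨h1, h2⟩)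
      · have hsup : lastArgmin η ζ (pathOf δ) = sSup S := rfl
        rw [hsup]
        apply le_antisymm
        · apply csSup_le ⟨m, h1⟩
          intro i hi
          by_contra hc
          exact h2 i (by omega) hi
        · exact le_csSup ⟨ζ, fun i hi => hi.1⟩ h1
      · have hsup : lastArgmin η ζ (pathOf δ) = sSup S := rfl
        rw [hsup, h2, csSup_empty, h1]
        rfl
  have heq : (fun δ : Fin ζ → Fin d → ℝ => lastArgmin η ζ (pathOf δ)) ⁻¹' {m}
      = (({δ : Fin ζ → Fin d → ℝ | m ≤ ζ ∧ ∀ j ≤ ζ, projZ η (pathOf δ) m ≤ projZ η (pathOf δ) j}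
          ∩ ⋂ i, {δ | m < i → ¬ (i ≤ ζ ∧ ∀ j ≤ ζ, projZ η (pathOf δ) i ≤ projZ η (pathOf δ) j)})
        ∪ ({δ | m = 0} ∩ ⋂ i, {δ | ¬ (i ≤ ζ ∧ ∀ j ≤ ζ, projZ η (pathOf δ) i ≤ projZ η (pathOf δ) j)})) := by
    ext δ
    rw [Set.mem_preimage, Set.mem_singleton_iff, hchar δ]
    simp only [Set.mem_union, Set.mem_inter_iff, Set.mem_setOf_eq, Set.mem_iInter,
      Set.eq_empty_iff_forall_notMem]
  rw [heq]
  apply MeasurableSet.union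
  · exact (m_memArgmin η m).inter (MeasurableSet.iInter fun i => by
      by_cases hmi : m < i
      · have h2 : {δ : Fin ζ → Fin d → ℝ |
            m < i → ¬ (i ≤ ζ ∧ ∀ j ≤ ζ, projZ η (pathOf δ) i ≤ projZ η (pathOf δ) j)}
            = {δ | i ≤ ζ ∧ ∀ j ≤ ζ, projZ η (pathOf δ) i ≤ projZ η (pathOf δ) j}ᶜ := by
          ext δ; simp [hmi]
        rw [h2]
        exact (m_memArgmin η i).compl
      · have h2 : {δ : Fin ζ → Fin d → ℝ |
            m < i → ¬ (i ≤ ζ ∧ ∀ j ≤ ζ, projZ η (pathOf δ) i ≤ projZ η (pathOf δ) j)}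
            = Set.univ := by
          ext δ; simp [hmi]
        rw [h2]
        exact MeasurableSet.univ)
  · refine MeasurableSet.inter ?_ (MeasurableSet.iInter fun i => (m_memArgmin η i).compl)
    by_cases hm : m = 0
    · have : {δ : Fin ζ → Fin d → ℝ | m = 0} = Set.univ := by ext δ; simp [hm]
      rw [this]; exact MeasurableSet.univ
    · have : {δ : Fin ζ → Fin d → ℝ | m = 0} = ∅ := by ext δ; simp [hm]
      rw [this]; exact MeasurableSet.empty

lemma m_downChain (i : ℕ) :
    Measurable fun δ : Fin ζ → Fin d → ℝ => downChain η ζ (pathOf δ) i := by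
  unfold downChain
  apply Measurable.ite
  · exact (m_Ami η ζ) (MeasurableSet.of_discrete (s := Set.Ici i))
  · apply measurable_some_opt.comp
    apply measurable_comp_nat (H := fun δ m => ∑ j ∈ Finset.Icc 1 m,
      if projZ η (pathOf δ) j ≤ 0 then pathOf δ j - pathOf δ (j - 1) else 0)
    · intro m
      exact Finset.measurable_sum _ (fun j _ => Measurable.ite (m_setZle η j)
        ((m_pathOf j).sub (m_pathOf (j - 1))) measurable_const)
    · exact m_alphaMi η i
  · exact measurable_const

lemma m_upChain (i : ℕ) :
    Measurable fun δ : Fin ζ → Fin d → ℝ => upChain η ζ (pathOf δ) i := by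
  unfold upChain
  apply Measurable.ite
  · exact (m_Apl η ζ) (MeasurableSet.of_discrete (s := Set.Ici i))
  · apply measurable_some_opt.comp
    apply measurable_comp_nat (H := fun δ m => ∑ j ∈ Finset.Icc 1 m,
      if 0 < projZ η (pathOf δ) j then pathOf δ j - pathOf δ (j - 1) else 0)
    · intro m
      exact Finset.measurable_sum _ (fun j _ => Measurable.ite (m_setZpos η j)
        ((m_pathOf j).sub (m_pathOf (j - 1))) measurable_const)
    · exact m_alphaPl η i
  · exact measurable_const

lemma m_preChain_neg (i : ℕ) :
    Measurable fun δ : Fin ζ → Fin d → ℝ =>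
      Option.map (fun v => -v) (preChain η ζ (pathOf δ) i) := by
  have heq : (fun δ : Fin ζ → Fin d → ℝ =>
      Option.map (fun v => -v) (preChain η ζ (pathOf δ) i))
      = fun δ => if i ≤ lastArgmin η ζ (pathOf δ) then
          some (-(pathOf δ (lastArgmin η ζ (pathOf δ) - i)
            - pathOf δ (lastArgmin η ζ (pathOf δ)))) else none := by
    funext δ
    unfold preChain
    split_ifs <;> simp
  rw [heq]
  apply Measurable.ite
  · exact (m_lastArgmin η) (MeasurableSet.of_discrete (s := Set.Ici i))
  · apply measurable_some_opt.comp
    apply measurable_comp_nat (H := fun δ m => -(pathOf δ (m - i) - pathOf δ m))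
    · intro m
      exact ((m_pathOf (m - i)).sub (m_pathOf m)).neg
    · exact m_lastArgmin η
  · exact measurable_const

lemma m_postChain (i : ℕ) :
    Measurable fun δ : Fin ζ → Fin d → ℝ => postChain η ζ (pathOf δ) i := by
  unfold postChain
  apply Measurable.ite
  · have : {δ : Fin ζ → Fin d → ℝ | i ≤ ζ - lastArgmin η ζ (pathOf δ)}
        = (fun δ : Fin ζ → Fin d → ℝ => ζ - lastArgmin η ζ (pathOf δ)) ⁻¹' (Set.Ici i) := rfl
    rw [this]
    exact ((measurable_const.sub (m_lastArgmin η))) (MeasurableSet.of_discrete)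
  · apply measurable_some_opt.comp
    apply measurable_comp_nat (H := fun δ m => pathOf δ (m + i) - pathOf δ m)
    · intro m
      exact (m_pathOf (m + i)).sub (m_pathOf m)
    · exact m_lastArgmin η
  · exact measurable_const

lemma m_Ffun : Measurable (Ffun η ζ) := by
  apply Measurable.prodMk
  · exact measurable_pi_lambda _ (fun i => m_downChain η i)
  · exact measurable_pi_lambda _ (fun i => m_upChain η i)

lemma m_Gfun : Measurable (Gfun η ζ) := by
  apply Measurable.prodMk
  · exact measurable_pi_lambda _ (fun i => m_preChain_neg η i)
  · exact measurable_pi_lambda _ (fun i => m_postChain η i)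

end Meas

/-- **Discrete representation theorem** (Theorem A.1): for a chain with exchangeable
increments, `(X↓, X↑)` has the same law as `(-←X, →X)`. -/
theorem discrete_representation
    {Ω : Type*} [MeasurableSpace Ω] (μ : Measure Ω) [IsProbabilityMeasure μ]
    (ζ : ℕ) (η : Fin d → ℝ) (hη : η ≠ 0)
    (X : Ω → ℕ → Fin d → ℝ) (hmeas : ∀ i, Measurable fun ω => X ω i)
    (hX0 : ∀ ω, X ω 0 = 0)
    (hexch : ∀ σ : Equiv.Perm (Fin ζ),
      Measure.map (fun ω => fun j : Fin ζ => X ω ((σ j : ℕ) + 1) - X ω (σ j : ℕ)) μ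
        = Measure.map (fun ω => fun j : Fin ζ => X ω ((j : ℕ) + 1) - X ω (j : ℕ)) μ) :
    Measure.map (fun ω => (downChain η ζ (X ω), upChain η ζ (X ω))) μ
      = Measure.map (fun ω =>
          (fun i => Option.map (fun v => -v) (preChain η ζ (X ω) i),
            postChain η ζ (X ω))) μ := by
  set inc : Ω → (Fin ζ → Fin d → ℝ) :=
    fun ω => fun j : Fin ζ => X ω ((j : ℕ) + 1) - X ω (j : ℕ) with hinc
  have m_inc : Measurable inc :=
    measurable_pi_lambda _ (fun j => (hmeas ((j : ℕ) + 1)).sub (hmeas (j : ℕ)))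
  have hagree : ∀ ω, ∀ j ≤ ζ, pathOf (inc ω) j = X ω j := by
    intro ω
    exact pathOf_incr_tuple ζ (X ω) (hX0 ω)
  have hFside : (fun ω => (downChain η ζ (X ω), upChain η ζ (X ω)))
      = fun ω => Ffun η ζ (inc ω) := by
    funext ω
    unfold Ffun
    rw [downChain_agree η ζ (hagree ω), upChain_agree η ζ (hagree ω)]
  have hGside : (fun ω => (fun i => Option.map (fun v => -v) (preChain η ζ (X ω) i),
      postChain η ζ (X ω))) = fun ω => Gfun η ζ (inc ω) := by
    funext ω
    unfold Gfun
    rw [preChain_agree η ζ (hagree ω), postChain_agree η ζ (hagree ω)]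
  rw [hFside, hGside]
  have mF : Measurable fun ω => Ffun η ζ (inc ω) := (m_Ffun η).comp m_inc
  have mG : Measurable fun ω => Gfun η ζ (inc ω) := (m_Gfun η).comp m_inc
  ext s hs
  rw [Measure.map_apply mF hs, Measure.map_apply mG hs]
  have m_incπ : ∀ π : Equiv.Perm (Fin ζ), Measurable fun ω => fun j : Fin ζ => inc ω (π j) :=
    fun π => measurable_pi_lambda _ (fun j => (measurable_pi_apply (π j)).comp m_inc)
  have mAF : ∀ π : Equiv.Perm (Fin ζ),
      MeasurableSet ((fun ω => Ffun η ζ (fun j => inc ω (π j))) ⁻¹' s) :=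
    fun π => ((m_Ffun η).comp (m_incπ π)) hs
  have mAG : ∀ π : Equiv.Perm (Fin ζ),
      MeasurableSet ((fun ω => Gfun η ζ (fun j => inc ω (π j))) ⁻¹' s) :=
    fun π => ((m_Gfun η).comp (m_incπ π)) hs
  have hmap : ∀ π : Equiv.Perm (Fin ζ),
      Measure.map (fun ω => fun j : Fin ζ => inc ω (π j)) μ = Measure.map inc μ := by
    intro π
    have h1 : (fun ω => fun j : Fin ζ => inc ω (π j))
        = fun ω => fun j : Fin ζ => X ω ((π j : ℕ) + 1) - X ω (π j : ℕ) := rfl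
    rw [h1, hexch π]
  have keyF : ∀ π : Equiv.Perm (Fin ζ),
      μ ((fun ω => Ffun η ζ (fun j => inc ω (π j))) ⁻¹' s)
        = μ ((fun ω => Ffun η ζ (inc ω)) ⁻¹' s) := by
    intro π
    have h1 : (fun ω => Ffun η ζ (fun j => inc ω (π j))) ⁻¹' s
        = (fun ω => fun j : Fin ζ => inc ω (π j)) ⁻¹' (Ffun η ζ ⁻¹' s) := rfl
    have h2 : (fun ω => Ffun η ζ (inc ω)) ⁻¹' s = inc ⁻¹' (Ffun η ζ ⁻¹' s) := rfl
    rw [h1, h2, ← Measure.map_apply (m_incπ π) ((m_Ffun η) hs),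
      ← Measure.map_apply m_inc ((m_Ffun η) hs), hmap π]
  have keyG : ∀ π : Equiv.Perm (Fin ζ),
      μ ((fun ω => Gfun η ζ (fun j => inc ω (π j))) ⁻¹' s)
        = μ ((fun ω => Gfun η ζ (inc ω)) ⁻¹' s) := by
    intro π
    have h1 : (fun ω => Gfun η ζ (fun j => inc ω (π j))) ⁻¹' s
        = (fun ω => fun j : Fin ζ => inc ω (π j)) ⁻¹' (Gfun η ζ ⁻¹' s) := rfl
    have h2 : (fun ω => Gfun η ζ (inc ω)) ⁻¹' s = inc ⁻¹' (Gfun η ζ ⁻¹' s) := rfl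
    rw [h1, h2, ← Measure.map_apply (m_incπ π) ((m_Gfun η) hs),
      ← Measure.map_apply m_inc ((m_Gfun η) hs), hmap π]
  have hmid : ∑ π : Equiv.Perm (Fin ζ), μ ((fun ω => Ffun η ζ (fun j => inc ω (π j))) ⁻¹' s)
      = ∑ π : Equiv.Perm (Fin ζ), μ ((fun ω => Gfun η ζ (fun j => inc ω (π j))) ⁻¹' s) := by
    have hiF : ∀ π : Equiv.Perm (Fin ζ),
        μ ((fun ω => Ffun η ζ (fun j => inc ω (π j))) ⁻¹' s)
          = ∫⁻ ω, Set.indicator ((fun ω => Ffun η ζ (fun j => inc ω (π j))) ⁻¹' s)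
              (1 : Ω → ENNReal) ω ∂μ :=
      fun π => (lintegral_indicator_one (mAF π)).symm
    have hiG : ∀ π : Equiv.Perm (Fin ζ),
        μ ((fun ω => Gfun η ζ (fun j => inc ω (π j))) ⁻¹' s)
          = ∫⁻ ω, Set.indicator ((fun ω => Gfun η ζ (fun j => inc ω (π j))) ⁻¹' s)
              (1 : Ω → ENNReal) ω ∂μ :=
      fun π => (lintegral_indicator_one (mAG π)).symm
    rw [Finset.sum_congr rfl (fun π _ => hiF π), Finset.sum_congr rfl (fun π _ => hiG π),
      ← lintegral_finset_sum _ (fun π _ => (measurable_one.indicator (mAF π))),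
      ← lintegral_finset_sum _ (fun π _ => (measurable_one.indicator (mAG π)))]
    apply lintegral_congr
    intro ω
    have hpt := sum_FG η (inc ω)
      (h := fun t : ((ℕ → Option (Fin d → ℝ)) × (ℕ → Option (Fin d → ℝ))) =>
        if t ∈ s then (1 : ENNReal) else 0)
    calc ∑ π : Equiv.Perm (Fin ζ),
          Set.indicator ((fun ω => Ffun η ζ (fun j => inc ω (π j))) ⁻¹' s)
            (1 : Ω → ENNReal) ω
        = ∑ π : Equiv.Perm (Fin ζ),
            (if Ffun η ζ (fun j => inc ω (π j)) ∈ s then (1 : ENNReal) else 0) := by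
          apply Finset.sum_congr rfl
          intro π _
          rw [Set.indicator_apply]
          rfl
      _ = ∑ π : Equiv.Perm (Fin ζ),
            (if Gfun η ζ (fun j => inc ω (π j)) ∈ s then (1 : ENNReal) else 0) := hpt
      _ = ∑ π : Equiv.Perm (Fin ζ),
          Set.indicator ((fun ω => Gfun η ζ (fun j => inc ω (π j))) ⁻¹' s)
            (1 : Ω → ENNReal) ω := by
          apply Finset.sum_congr rfl
          intro π _
          rw [Set.indicator_apply]
          rfl
  have hsumF : ∑ π : Equiv.Perm (Fin ζ), μ ((fun ω => Ffun η ζ (fun j => inc ω (π j))) ⁻¹' s)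
      = (Fintype.card (Equiv.Perm (Fin ζ)) : ENNReal) * μ ((fun ω => Ffun η ζ (inc ω)) ⁻¹' s) := by
    rw [Finset.sum_congr rfl (fun π _ => keyF π), Finset.sum_const, Finset.card_univ,
      nsmul_eq_mul]
  have hsumG : ∑ π : Equiv.Perm (Fin ζ), μ ((fun ω => Gfun η ζ (fun j => inc ω (π j))) ⁻¹' s)
      = (Fintype.card (Equiv.Perm (Fin ζ)) : ENNReal) * μ ((fun ω => Gfun η ζ (inc ω)) ⁻¹' s) := by
    rw [Finset.sum_congr rfl (fun π _ => keyG π), Finset.sum_const, Finset.card_univ,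
      nsmul_eq_mul]
  have hfin : (Fintype.card (Equiv.Perm (Fin ζ)) : ENNReal) * μ ((fun ω => Ffun η ζ (inc ω)) ⁻¹' s)
      = (Fintype.card (Equiv.Perm (Fin ζ)) : ENNReal) * μ ((fun ω => Gfun η ζ (inc ω)) ⁻¹' s) := by
    rw [← hsumF, hmid, hsumG]
  have hc0 : (Fintype.card (Equiv.Perm (Fin ζ)) : ENNReal) ≠ 0 := by
    simp [Fintype.card_ne_zero]
  exact (ENNReal.mul_right_inj hc0 (ENNReal.natCast_ne_top _)).1 hfin
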